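/- Let Q = ABCD be a quadrilateral in ℝ² whose diagonal AC passes through the midpoint E of the diagonal BD. Then the midpoint p of AC satisfies: the four triangles ABp, BCp, CDp, DAp all have equal area, each equal to Vol₂(Q)/4. -/

import Mathlib

open MeasureTheory

/-- Twice-signed-area determinant of the pair of planar vectors `u`, `v`. -/
noncomputable def det2 (u v : EuclideanSpace ℝ (Fin 2)) : ℝ :=
  u 0 * v 1 - u 1 * v 0

/-- Area of the triangle with vertices `X Y Z ⊂ ℝ²`. -/
noncomputable def triArea (X Y Z : EuclideanSpace ℝ (Fin 2)) : ℝ :=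
  |det2 (Y - X) (Z - X)| / 2

open Set Pointwise

lemma volT : volume {p : ℝ × ℝ | 0 ≤ p.1 ∧ 0 ≤ p.2 ∧ p.1 + p.2 ≤ 1} = ENNReal.ofReal (1/2) := by
  have hmeas : MeasurableSet {p : ℝ × ℝ | 0 ≤ p.1 ∧ 0 ≤ p.2 ∧ p.1 + p.2 ≤ 1} := by
    apply MeasurableSet.inter
    · exact measurableSet_le measurable_const measurable_fst
    apply MeasurableSet.inter
    · exact measurableSet_le measurable_const measurable_snd
    · exact measurableSet_le (measurable_fst.add measurable_snd) measurable_const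
  rw [Measure.volume_eq_prod, Measure.prod_apply hmeas]
  have hslice : ∀ x : ℝ, (Prod.mk x ⁻¹' {p : ℝ × ℝ | 0 ≤ p.1 ∧ 0 ≤ p.2 ∧ p.1 + p.2 ≤ 1})
      = if 0 ≤ x then Icc 0 (1 - x) else ∅ := by
    intro x
    split_ifs with hx
    · ext y; simp only [mem_preimage, mem_setOf_eq, mem_Icc]
      constructor
      · rintro ⟨_, h2, h3⟩; exact ⟨h2, by linarith⟩
      · rintro ⟨h2, h3⟩; exact ⟨hx, h2, by linarith⟩
    · ext y; simp only [mem_preimage, mem_setOf_eq, mem_empty_iff_false, iff_false]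
      rintro ⟨h, _⟩; exact hx h
  have hv : ∀ x : ℝ, volume (Prod.mk x ⁻¹' {p : ℝ × ℝ | 0 ≤ p.1 ∧ 0 ≤ p.2 ∧ p.1 + p.2 ≤ 1})
      = indicator (Ici (0:ℝ)) (fun x => ENNReal.ofReal (1 - x)) x := by
    intro x
    rw [hslice]
    by_cases hx : 0 ≤ x <;> simp [hx, Real.volume_Icc]
  simp_rw [hv]
  rw [lintegral_indicator measurableSet_Ici _]
  have hsplit : (Ici (0:ℝ)) = Icc 0 1 ∪ Ioi 1 := by
    ext x; simp only [mem_Ici, mem_union, mem_Icc, mem_Ioi]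
    constructor
    · intro h; by_cases h1 : x ≤ 1
      · exact Or.inl ⟨h, h1⟩
      · exact Or.inr (by linarith)
    · rintro (⟨h,_⟩|h)
      · exact h
      · linarith
  rw [hsplit, lintegral_union measurableSet_Ioi
    (by rw [Set.disjoint_left]; intro a ha hb; exact absurd ha.2 (not_le.2 hb))]
  have h2 : ∫⁻ x in Ioi (1:ℝ), ENNReal.ofReal (1 - x) = 0 := by
    rw [lintegral_eq_zero_iff (by fun_prop)]
    filter_upwards [ae_restrict_mem measurableSet_Ioi] with x hx
    simp only [Pi.zero_apply, ENNReal.ofReal_eq_zero]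
    linarith [mem_Ioi.1 hx]
  rw [h2, add_zero, ← ofReal_integral_eq_lintegral_ofReal]
  · congr 1
    rw [integral_Icc_eq_integral_Ioc, ← intervalIntegral.integral_of_le zero_le_one]
    rw [intervalIntegral.integral_sub intervalIntegrable_const intervalIntegral.intervalIntegrable_id,
      integral_id, intervalIntegral.integral_const]
    norm_num
  · exact (continuous_const.sub continuous_id).integrableOn_Icc
  · filter_upwards [ae_restrict_mem measurableSet_Icc] with x hx
    simp only [Pi.zero_apply]
    linarith [(mem_Icc.1 hx).2]

noncomputable abbrev E2 := EuclideanSpace ℝ (Fin 2)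
noncomputable def ee0 : E2 := EuclideanSpace.single 0 1
noncomputable def ee1 : E2 := EuclideanSpace.single 1 1
def Sstd : Set E2 := {x | 0 ≤ x 0 ∧ 0 ≤ x 1 ∧ x 0 + x 1 ≤ 1}

lemma hull_std : convexHull ℝ {0, ee0, ee1} = Sstd := by
  apply Subset.antisymm
  · apply convexHull_min
    · rintro x (rfl | rfl | rfl) <;>
        simp [Sstd, ee0, ee1, EuclideanSpace.single_apply]
    · have h0 : Convex ℝ {x : E2 | 0 ≤ x 0} :=
        convex_halfSpace_ge (IsLinearMap.mk (fun a b => rfl) (fun c a => rfl)) 0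
      have h1 : Convex ℝ {x : E2 | 0 ≤ x 1} :=
        convex_halfSpace_ge (IsLinearMap.mk (fun a b => rfl) (fun c a => rfl)) 0
      have h2 : Convex ℝ {x : E2 | x 0 + x 1 ≤ 1} :=
        convex_halfSpace_le (IsLinearMap.mk (fun a b => by simp [PiLp.add_apply]; ring)
          (fun c a => by simp [PiLp.smul_apply, smul_eq_mul, mul_add])) 1
      have hSeq : Sstd = {x : E2 | 0 ≤ x 0} ∩ ({x | 0 ≤ x 1} ∩ {x | x 0 + x 1 ≤ 1}) := rfl
      rw [hSeq]
      exact h0.inter (h1.inter h2)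
  · intro x hx
    obtain ⟨hx0, hx1, hxs⟩ := hx
    have hxe : x = x 0 • ee0 + x 1 • ee1 := by
      ext i
      fin_cases i <;> simp [ee0, ee1, EuclideanSpace.single_apply]
    by_cases hs : x 0 + x 1 = 0
    · have h0 : x 0 = 0 := by linarith
      have h1 : x 1 = 0 := by linarith
      have : x = 0 := by rw [hxe, h0, h1]; simp
      rw [this]
      exact subset_convexHull ℝ _ (by simp)
    · set s := x 0 + x 1 with hsdef
      have hspos : 0 < s := lt_of_le_of_ne (by positivity) (Ne.symm hs)
      set q : E2 := (x 0 / s) • ee0 + (x 1 / s) • ee1 with hq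
      have hqmem : q ∈ convexHull ℝ ({0, ee0, ee1} : Set E2) := by
        have hseg : q ∈ segment ℝ ee0 ee1 := by
          refine ⟨x 0 / s, x 1 / s, by positivity, by positivity, ?_, rfl⟩
          field_simp
          exact hsdef.symm
        exact (convex_convexHull ℝ _).segment_subset
          (subset_convexHull ℝ _ (by simp)) (subset_convexHull ℝ _ (by simp)) hseg
      have hx2 : x ∈ segment ℝ (0 : E2) q := by
        refine ⟨1 - s, s, by linarith, le_of_lt hspos, by ring, ?_⟩
        have c0 : s * (x 0 / s) = x 0 := by field_simp
        have c1 : s * (x 1 / s) = x 1 := by field_simp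
        rw [smul_zero, zero_add, hq, smul_add, smul_smul, smul_smul, c0, c1, ← hxe]
      exact (convex_convexHull ℝ _).segment_subset
        (subset_convexHull ℝ _ (by simp)) hqmem hx2

lemma vol_Sstd : volume Sstd = ENNReal.ofReal (1/2) := by
  have hT : MeasurableSet {p : ℝ × ℝ | 0 ≤ p.1 ∧ 0 ≤ p.2 ∧ p.1 + p.2 ≤ 1} := by
    apply MeasurableSet.inter
    · exact measurableSet_le measurable_const measurable_fst
    apply MeasurableSet.inter
    · exact measurableSet_le measurable_const measurable_snd
    · exact measurableSet_le (measurable_fst.add measurable_snd) measurable_const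
  have h1 := EuclideanSpace.volume_preserving_symm_measurableEquiv_toLp (Fin 2)
  have h2 := volume_preserving_piFinTwo (fun _ : Fin 2 => ℝ)
  have hcomp := h2.comp h1
  have hS : Sstd = (⇑(MeasurableEquiv.piFinTwo fun _ : Fin 2 => ℝ) ∘ ⇑(MeasurableEquiv.toLp 2 (Fin 2 → ℝ)).symm) ⁻¹'
      {p : ℝ × ℝ | 0 ≤ p.1 ∧ 0 ≤ p.2 ∧ p.1 + p.2 ≤ 1} := by
    rfl
  rw [hS, hcomp.measure_preimage hT.nullMeasurableSet]
  exact volT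

noncomputable def Lmap (u v : E2) : E2 →ₗ[ℝ] E2 where
  toFun := fun x => x 0 • u + x 1 • v
  map_add' := by
    intro x y
    simp only [PiLp.add_apply, add_smul]
    abel
  map_smul' := by
    intro c x
    simp only [PiLp.smul_apply, smul_eq_mul, RingHom.id_apply, smul_add, mul_smul]


lemma det_Lmap (u v : E2) : LinearMap.det (Lmap u v) = det2 u v := by
  let b : Module.Basis (Fin 2) ℝ E2 := (EuclideanSpace.basisFun (Fin 2) ℝ).toBasis
  rw [← LinearMap.det_toMatrix b, Matrix.det_fin_two]
  have h : ∀ i j, LinearMap.toMatrix b b (Lmap u v) i j = (Lmap u v) (b j) i := by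
    intro i j
    rw [LinearMap.toMatrix_apply]
    simp [b, EuclideanSpace.basisFun_repr]
  simp only [h]
  have hb : ∀ j, b j = EuclideanSpace.single j 1 := by
    intro j
    simp [b]
  simp [hb, Lmap, det2, EuclideanSpace.single_apply]
  ring

lemma volume_triangle (A B C : E2) :
    volume (convexHull ℝ {A, B, C}) = ENNReal.ofReal (triArea A B C) := by
  set u := B - A
  set v := C - A
  set L := Lmap u v
  let f : E2 →ᵃ[ℝ] E2 :=
    { toFun := fun x => A + L x
      linear := L
      map_vadd' := by
        intro q w
        simp only [vadd_eq_add, map_add]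
        abel }
  have hL0 : L ee0 = u := by
    show ee0 0 • u + ee0 1 • v = u
    simp [ee0, EuclideanSpace.single_apply]
  have hL1 : L ee1 = v := by
    show ee1 0 • u + ee1 1 • v = v
    simp [ee1, EuclideanSpace.single_apply]
  have himg : f '' ({0, ee0, ee1} : Set E2) = {A, B, C} := by
    simp only [image_insert_eq, image_singleton]
    have h0 : f 0 = A := by show A + L 0 = A; simp
    have h1 : f ee0 = B := by show A + L ee0 = B; rw [hL0]; simp [u]
    have h2 : f ee1 = C := by show A + L ee1 = C; rw [hL1]; simp [v]
    rw [h0, h1, h2]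
  have hhull : convexHull ℝ ({A, B, C} : Set E2) = f '' convexHull ℝ ({0, ee0, ee1} : Set E2) := by
    rw [f.image_convexHull, himg]
  rw [hhull, hull_std]
  have hcomp : f '' Sstd = (fun y => A + y) '' (L '' Sstd) := by
    rw [image_image]; rfl
  rw [hcomp]
  have htrans : (fun y => A + y) '' (L '' Sstd) = A +ᵥ (L '' Sstd) := rfl
  rw [htrans, measure_vadd, Measure.addHaar_image_linearMap, det_Lmap, vol_Sstd,
    ← ENNReal.ofReal_mul (abs_nonneg _)]
  rw [triArea]
  congr 1
  ring

/-- **Equal-area splitting of a quadrilateral.**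
Let `Q = ABCD` be a simple quadrilateral in `ℝ²` (decomposed by the diagonal `AC` into
triangles `ABC` and `ACD`) such that `AC` passes through the midpoint `E` of the diagonal
`BD`.  Then the midpoint `p` of `AC` makes the four triangles `ABp`, `BCp`, `CDp`, `DAp`
have equal areas, each equal to a quarter of the area of `Q`. -/
theorem quadrilateral_equal_triangle_areas
    (A B C D : EuclideanSpace ℝ (Fin 2))
    (hsimple : volume (convexHull ℝ {A, B, C} ∩ convexHull ℝ {A, C, D}) = 0)
    (hE : midpoint ℝ B D ∈ segment ℝ A C)
    (p : EuclideanSpace ℝ (Fin 2)) (hp : p = midpoint ℝ A C) :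
    triArea A B p = (volume (convexHull ℝ {A, B, C} ∪ convexHull ℝ {A, C, D})).toReal / 4 ∧
    triArea B C p = (volume (convexHull ℝ {A, B, C} ∪ convexHull ℝ {A, C, D})).toReal / 4 ∧
    triArea C D p = (volume (convexHull ℝ {A, B, C} ∪ convexHull ℝ {A, C, D})).toReal / 4 ∧
    triArea D A p = (volume (convexHull ℝ {A, B, C} ∪ convexHull ℝ {A, C, D})).toReal / 4 := by
  have hmeasD : MeasurableSet (convexHull ℝ ({A, C, D} : Set (EuclideanSpace ℝ (Fin 2)))) := by
    have : IsCompact (convexHull ℝ ({A, C, D} : Set (EuclideanSpace ℝ (Fin 2)))) :=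
      (Set.Finite.isCompact_convexHull ℝ (by simp))
    exact this.isClosed.measurableSet
  have hunion : volume (convexHull ℝ ({A, B, C} : Set (EuclideanSpace ℝ (Fin 2))) ∪ convexHull ℝ {A, C, D})
      = ENNReal.ofReal (triArea A B C + triArea A C D) := by
    have h := measure_union_add_inter (μ := volume) (convexHull ℝ ({A, B, C} : Set (EuclideanSpace ℝ (Fin 2)))) hmeasD
    rw [hsimple, add_zero] at h
    rw [h, volume_triangle, volume_triangle, ← ENNReal.ofReal_add]
    · exact div_nonneg (abs_nonneg _) (by norm_num)
    · exact div_nonneg (abs_nonneg _) (by norm_num)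
  have hmid : ∀ (X Y : EuclideanSpace ℝ (Fin 2)) (i : Fin 2),
      midpoint ℝ X Y i = (X i + Y i) / 2 := by
    intro X Y i
    rw [midpoint_eq_smul_add]
    simp [PiLp.smul_apply, PiLp.add_apply]
    ring
  obtain ⟨s, t, hs, ht, hst, heq⟩ := hE
  have heq0 : s * A 0 + t * C 0 = (B 0 + D 0) / 2 := by
    have := congrArg (fun x : EuclideanSpace ℝ (Fin 2) => x 0) heq
    simpa [PiLp.add_apply, PiLp.smul_apply, hmid] using this
  have heq1 : s * A 1 + t * C 1 = (B 1 + D 1) / 2 := by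
    have := congrArg (fun x : EuclideanSpace ℝ (Fin 2) => x 1) heq
    simpa [PiLp.add_apply, PiLp.smul_apply, hmid] using this
  have hp0 : p 0 = (A 0 + C 0) / 2 := by rw [hp]; exact hmid A C 0
  have hp1 : p 1 = (A 1 + C 1) / 2 := by rw [hp]; exact hmid A C 1
  have h2 : s = 1 - t := by linarith
  rw [h2] at heq0 heq1
  have hkey : (D 0 - A 0) * (C 1 - A 1) - (D 1 - A 1) * (C 0 - A 0)
      = -((B 0 - A 0) * (C 1 - A 1) - (B 1 - A 1) * (C 0 - A 0)) := by
    linear_combination (-2 * (C 1 - A 1)) * heq0 + (2 * (C 0 - A 0)) * heq1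
  have hsub : ∀ (X Y : EuclideanSpace ℝ (Fin 2)) (i : Fin 2), (X - Y) i = X i - Y i :=
    fun X Y i => rfl
  have htoReal : (volume (convexHull ℝ ({A, B, C} : Set (EuclideanSpace ℝ (Fin 2))) ∪ convexHull ℝ {A, C, D})).toReal
      = |(B 0 - A 0) * (C 1 - A 1) - (B 1 - A 1) * (C 0 - A 0)| := by
    rw [hunion, ENNReal.toReal_ofReal (by unfold triArea; positivity)]
    simp only [triArea, det2, hsub]
    have h1 : (C 0 - A 0) * (D 1 - A 1) - (C 1 - A 1) * (D 0 - A 0)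
        = (B 0 - A 0) * (C 1 - A 1) - (B 1 - A 1) * (C 0 - A 0) := by
      linear_combination -hkey
    rw [h1]
    ring
  rw [htoReal]
  have habs : ∀ x : ℝ,
      x = ((B 0 - A 0) * (C 1 - A 1) - (B 1 - A 1) * (C 0 - A 0)) / 2 ∨
      x = -(((B 0 - A 0) * (C 1 - A 1) - (B 1 - A 1) * (C 0 - A 0)) / 2) →
      |x| = |(B 0 - A 0) * (C 1 - A 1) - (B 1 - A 1) * (C 0 - A 0)| / 2 := by
    rintro x (rfl | rfl)
    · rw [abs_div]; norm_num
    · rw [abs_neg, abs_div]; norm_num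
  refine ⟨?_, ?_, ?_, ?_⟩ <;> simp only [triArea, det2, hsub, hp0, hp1]
  · rw [habs _ (Or.inl (by ring))]; ring
  · rw [habs _ (Or.inl (by ring))]; ring
  · rw [habs _ (Or.inl (by linear_combination (-1/2 : ℝ) * hkey))]; ring
  · rw [habs _ (Or.inl (by linear_combination (-1/2 : ℝ) * hkey))]; ring
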